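/- arXiv:2008.04767 — 4 statements merged into one kernel-verified Lean document; each statement's English description precedes it below -/
import Mathlib

section
/- Let I ⊆ ℝ be a nonempty open interval, a ∈ ℝ, σ ∈ {−1, 1}, and b : I → ℝ twice differentiable such that for all t ∈ I one has a⁴ + b(t)² > 0 and −2(a⁴ + b(t)²) + a·b′(t) ≠ 0. Define k̄₁(t) = σ·(−2(a⁴ + b(t)²) + a·b′(t)) / (2·√(a⁴ + b(t)²)) and k̄₂(t) = σ·[(a⁴ + b(t)²)·(8·b(t)·b″(t) + 20·a³·b′(t) − 8·a⁶ − 8·a²·b(t)²) − a·b′(t)³ − 2·(3·a⁴ + 7·b(t)²)·b′(t)²] / (4·√(a⁴ + b(t)²)·(−2·(a⁴ + b(t)²) + a·b′(t))²). Then k̄₁ and k̄₂ are both constant on I if and only if b is constant on I. Moreover, if b is constant with value b₀, then k̄₁(t) = −σ·√(a⁴ + b₀²) and k̄₂(t) = −σ·a²/(2·√(a⁴ + b₀²)) for all t ∈ I. -/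
/-- Theorem 3.11 (analytic content): the curvatures `k̄₁` and `k̄₂` of the framed null slant
curve are both constant iff `b` is constant, and for constant `b = b₀` they take the values
(3.35) and (3.36). -/
theorem stmt_1 (I : Set ℝ) (hI : ∃ lo hi : ℝ, I = Set.Ioo lo hi) (hne : I.Nonempty)
    (a σ : ℝ) (hσ : σ = -1 ∨ σ = 1)
    (b b' b'' : ℝ → ℝ)
    (hd1 : ∀ t ∈ I, HasDerivAt b (b' t) t)
    (hd2 : ∀ t ∈ I, HasDerivAt b' (b'' t) t)
    (hpos : ∀ t ∈ I, a ^ 4 + (b t) ^ 2 > 0)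
    (hng : ∀ t ∈ I, -2 * (a ^ 4 + (b t) ^ 2) + a * b' t ≠ 0)
    (k₁ k₂ : ℝ → ℝ)
    (hk₁ : ∀ t ∈ I, k₁ t =
      σ * (-2 * (a ^ 4 + (b t) ^ 2) + a * b' t) / (2 * Real.sqrt (a ^ 4 + (b t) ^ 2)))
    (hk₂ : ∀ t ∈ I, k₂ t =
      σ * ((a ^ 4 + (b t) ^ 2) *
            (8 * b t * b'' t + 20 * a ^ 3 * b' t - 8 * a ^ 6 - 8 * a ^ 2 * (b t) ^ 2)
          - a * (b' t) ^ 3 - 2 * (3 * a ^ 4 + 7 * (b t) ^ 2) * (b' t) ^ 2) /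
        (4 * Real.sqrt (a ^ 4 + (b t) ^ 2) *
          (-2 * (a ^ 4 + (b t) ^ 2) + a * b' t) ^ 2)) :
    (((∃ c₁ : ℝ, ∀ t ∈ I, k₁ t = c₁) ∧ (∃ c₂ : ℝ, ∀ t ∈ I, k₂ t = c₂)) ↔
      (∃ c : ℝ, ∀ t ∈ I, b t = c)) ∧
    (∀ b₀ : ℝ, (∀ t ∈ I, b t = b₀) →
      ∀ t ∈ I, k₁ t = -σ * Real.sqrt (a ^ 4 + b₀ ^ 2) ∧
        k₂ t = -σ * a ^ 2 / (2 * Real.sqrt (a ^ 4 + b₀ ^ 2))) := by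
  obtain ⟨lo, hi, hIeq⟩ := hI
  have hIopen : IsOpen I := hIeq ▸ isOpen_Ioo
  have hσ2 : σ ^ 2 = 1 := by rcases hσ with h | h <;> rw [h] <;> norm_num
  have hbcont : ContinuousOn b I := fun t ht => (hd1 t ht).continuousAt.continuousWithinAt
  -- squared sqrt facts
  have hs2 : ∀ t ∈ I, (Real.sqrt (a ^ 4 + (b t) ^ 2)) ^ 2 = a ^ 4 + (b t) ^ 2 :=
    fun t ht => Real.sq_sqrt (hpos t ht).le
  have hspos : ∀ t ∈ I, 0 < Real.sqrt (a ^ 4 + (b t) ^ 2) :=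
    fun t ht => Real.sqrt_pos.2 (hpos t ht)
  -- ===== the "moreover" part =====
  have main2 : ∀ b₀ : ℝ, (∀ t ∈ I, b t = b₀) →
      ∀ t ∈ I, k₁ t = -σ * Real.sqrt (a ^ 4 + b₀ ^ 2) ∧
        k₂ t = -σ * a ^ 2 / (2 * Real.sqrt (a ^ 4 + b₀ ^ 2)) := by
    intro b₀ hb
    have hb'0 : ∀ t ∈ I, b' t = 0 := by
      intro t ht
      have heq : b =ᶠ[nhds t] fun _ => b₀ :=
        Filter.eventuallyEq_of_mem (hIopen.mem_nhds ht) (fun u hu => hb u hu)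
      exact (hd1 t ht).unique ((hasDerivAt_const t b₀).congr_of_eventuallyEq heq)
    have hb''0 : ∀ t ∈ I, b'' t = 0 := by
      intro t ht
      have heq : b' =ᶠ[nhds t] fun _ => (0 : ℝ) :=
        Filter.eventuallyEq_of_mem (hIopen.mem_nhds ht) (fun u hu => hb'0 u hu)
      exact (hd2 t ht).unique ((hasDerivAt_const t (0 : ℝ)).congr_of_eventuallyEq heq)
    intro t ht
    have hQpos : (0 : ℝ) < a ^ 4 + b₀ ^ 2 := by have := hpos t ht; rwa [hb t ht] at this
    have hsq : (Real.sqrt (a ^ 4 + b₀ ^ 2)) ^ 2 = a ^ 4 + b₀ ^ 2 := Real.sq_sqrt hQpos.le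
    have hsp : 0 < Real.sqrt (a ^ 4 + b₀ ^ 2) := Real.sqrt_pos.2 hQpos
    constructor
    · rw [hk₁ t ht, hb t ht, hb'0 t ht]
      rw [div_eq_iff (by positivity)]
      linear_combination (2 * σ) * hsq
    · rw [hk₂ t ht, hb t ht, hb'0 t ht, hb''0 t ht]
      have h0 : -2 * (a ^ 4 + b₀ ^ 2) + a * 0 ≠ 0 := by
        have : -2 * (a ^ 4 + b₀ ^ 2) + a * 0 < 0 := by nlinarith
        exact ne_of_lt this
      have hden : 4 * Real.sqrt (a ^ 4 + b₀ ^ 2) *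
          (-2 * (a ^ 4 + b₀ ^ 2) + a * 0) ^ 2 ≠ 0 :=
        mul_ne_zero (by positivity) (pow_ne_zero 2 h0)
      rw [div_eq_div_iff hden (by positivity)]
      ring
  refine ⟨⟨?_, ?_⟩, main2⟩
  swap
  · rintro ⟨c, hc⟩
    exact ⟨⟨-σ * Real.sqrt (a ^ 4 + c ^ 2), fun t ht => (main2 c hc t ht).1⟩,
      ⟨-σ * a ^ 2 / (2 * Real.sqrt (a ^ 4 + c ^ 2)), fun t ht => (main2 c hc t ht).2⟩⟩
  -- ===== forward direction =====
  rintro ⟨⟨c₁, hc₁⟩, ⟨c₂, hc₂⟩⟩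
  set c : ℝ := σ * c₁ with hcdef
  -- k₁ constant gives the first relation
  have hP : ∀ t ∈ I, -2 * (a ^ 4 + (b t) ^ 2) + a * b' t =
      2 * c * Real.sqrt (a ^ 4 + (b t) ^ 2) := by
    intro t ht
    have h := hk₁ t ht
    rw [hc₁ t ht] at h
    have h2 : c₁ * (2 * Real.sqrt (a ^ 4 + (b t) ^ 2)) =
        σ * (-2 * (a ^ 4 + (b t) ^ 2) + a * b' t) := by
      rw [h]; field_simp [(hspos t ht).ne']
    linear_combination (-σ) * h2 - (-2 * (a ^ 4 + (b t) ^ 2) + a * b' t) * hσ2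
  have hc0 : c ≠ 0 := by
    obtain ⟨t₀, ht₀⟩ := hne
    intro h
    apply hng t₀ ht₀
    rw [hP t₀ ht₀, h]; ring
  have hE1 : ∀ t ∈ I, a * b' t =
      2 * (Real.sqrt (a ^ 4 + (b t) ^ 2)) ^ 2 + 2 * c * Real.sqrt (a ^ 4 + (b t) ^ 2) := by
    intro t ht
    linear_combination (hP t ht) - 2 * (hs2 t ht)
  -- differentiating the squared first relation
  have hder : ∀ t ∈ I,
      2 * (a * b' t - 2 * (a ^ 4 + (b t) ^ 2)) * (a * b'' t - 2 * (2 * (b t) * b' t)) =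
        4 * c ^ 2 * (2 * (b t) * b' t) := by
    intro t ht
    have hsq : HasDerivAt (fun u => a ^ 4 + (b u) ^ 2) (2 * (b t) * b' t) t := by
      have h : HasDerivAt (fun u => a ^ 4 + (b u) ^ 2) (((2 : ℕ) : ℝ) * b t ^ (2 - 1) * b' t) t :=
        ((hd1 t ht).fun_pow 2).const_add (a ^ 4)
      convert h using 1
      push_cast; ring
    have hinner : HasDerivAt (fun u => a * b' u - 2 * (a ^ 4 + (b u) ^ 2))
        (a * b'' t - 2 * (2 * (b t) * b' t)) t :=
      ((hd2 t ht).const_mul a).sub (hsq.const_mul 2)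
    have hf := hinner.pow 2
    have hg : HasDerivAt (fun u => 4 * c ^ 2 * (a ^ 4 + (b u) ^ 2))
        (4 * c ^ 2 * (2 * (b t) * b' t)) t := hsq.const_mul (4 * c ^ 2)
    have heq : (fun u => (a * b' u - 2 * (a ^ 4 + (b u) ^ 2)) ^ 2) =ᶠ[nhds t]
        (fun u => 4 * c ^ 2 * (a ^ 4 + (b u) ^ 2)) := by
      refine Filter.eventuallyEq_of_mem (hIopen.mem_nhds ht) (fun u hu => ?_)
      have h1 := hP u hu
      have h2 := hs2 u hu
      linear_combination
        ((a * b' u - 2 * (a ^ 4 + (b u) ^ 2)) + 2 * c * Real.sqrt (a ^ 4 + (b u) ^ 2)) * h1 +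
          4 * c ^ 2 * h2
    have huniq := (heq.hasDerivAt_iff.mp hf).unique hg
    push_cast at huniq
    linear_combination huniq
  -- second relation: the value of a² b''
  have hE2 : ∀ t ∈ I, a ^ 2 * b'' t =
      4 * (b t) * (Real.sqrt (a ^ 4 + (b t) ^ 2) + c) *
        (2 * Real.sqrt (a ^ 4 + (b t) ^ 2) + c) := by
    intro t ht
    set s := Real.sqrt (a ^ 4 + (b t) ^ 2) with hsdef
    have hs := hspos t ht
    have h4c : 4 * c * (s * (a * b'' t - 4 * (b t) * b' t) - 2 * c * ((b t) * b' t)) = 0 := by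
      linear_combination (hder t ht) - 2 * (a * b'' t - 4 * (b t) * b' t) * (hP t ht)
    have hX : s * (a * b'' t) = 4 * s * ((b t) * b' t) + 2 * c * ((b t) * b' t) := by
      have h0 : s * (a * b'' t - 4 * (b t) * b' t) - 2 * c * ((b t) * b' t) = 0 := by
        rcases mul_eq_zero.mp h4c with h | h
        · exact absurd h (by simpa using hc0)
        · exact h
      linear_combination h0
    have hmul : s * (a ^ 2 * b'' t) = s * (4 * (b t) * (s + c) * (2 * s + c)) := by
      linear_combination a * hX + (4 * s + 2 * c) * (b t) * (hE1 t ht)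
    exact mul_left_cancel₀ (ne_of_gt hs) hmul
  -- k₂ constant: the numerator value
  have hN : ∀ t ∈ I,
      (a ^ 4 + (b t) ^ 2) *
            (8 * b t * b'' t + 20 * a ^ 3 * b' t - 8 * a ^ 6 - 8 * a ^ 2 * (b t) ^ 2)
          - a * (b' t) ^ 3 - 2 * (3 * a ^ 4 + 7 * (b t) ^ 2) * (b' t) ^ 2 =
        16 * σ * c₂ * c ^ 2 * (Real.sqrt (a ^ 4 + (b t) ^ 2)) ^ 3 := by
    intro t ht
    set s := Real.sqrt (a ^ 4 + (b t) ^ 2) with hsdef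
    have hs := hspos t ht
    have hdenom : 4 * s * (-2 * (a ^ 4 + (b t) ^ 2) + a * b' t) ^ 2 = 16 * c ^ 2 * s ^ 3 := by
      linear_combination
        (4 * s * ((-2 * (a ^ 4 + (b t) ^ 2) + a * b' t) + 2 * c * s)) * (hP t ht)
    have hdne : (16 : ℝ) * c ^ 2 * s ^ 3 ≠ 0 := by positivity
    have h := hk₂ t ht
    rw [hc₂ t ht, hdenom] at h
    have h2 : c₂ * (16 * c ^ 2 * s ^ 3) =
        σ * ((a ^ 4 + (b t) ^ 2) *
            (8 * b t * b'' t + 20 * a ^ 3 * b' t - 8 * a ^ 6 - 8 * a ^ 2 * (b t) ^ 2)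
          - a * (b' t) ^ 3 - 2 * (3 * a ^ 4 + 7 * (b t) ^ 2) * (b' t) ^ 2) := by
      rw [h]; field_simp [hc0, (hspos t ht).ne']
      exact mul_div_cancel_right₀ _ (hspos t ht).ne'
    linear_combination (-σ) * h2 -
      ((a ^ 4 + (b t) ^ 2) *
            (8 * b t * b'' t + 20 * a ^ 3 * b' t - 8 * a ^ 6 - 8 * a ^ 2 * (b t) ^ 2)
          - a * (b' t) ^ 3 - 2 * (3 * a ^ 4 + 7 * (b t) ^ 2) * (b' t) ^ 2) * hσ2
  -- the key quadratic relation for s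
  have hkey : ∀ t ∈ I, 5 * (Real.sqrt (a ^ 4 + (b t) ^ 2)) ^ 2 +
      6 * c * Real.sqrt (a ^ 4 + (b t) ^ 2) = a ^ 4 - c ^ 2 - 2 * σ * c₂ * c * a ^ 2 := by
    intro t ht
    set s := Real.sqrt (a ^ 4 + (b t) ^ 2) with hsdef
    have hs := hspos t ht
    have hE3 : a ^ 4 = s ^ 2 - (b t) ^ 2 := by linear_combination -(hs2 t ht)
    have hG : 16 * σ * c₂ * c ^ 2 * s ^ 3 * a ^ 2 =
        -8 * c * s ^ 3 * (5 * s ^ 2 + 6 * c * s + c ^ 2 - a ^ 4) := by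
      linear_combination (-(a ^ 2)) * (hN t ht) +
        (8 * (b t) ^ 3 + 8 * a ^ 4 * (b t)) * (hE2 t ht) +
        (-4 * s ^ 2 * c ^ 2 - 8 * s ^ 3 * c - 4 * s ^ 4 - 28 * (b t) ^ 2 * s * c
          - 28 * (b t) ^ 2 * s ^ 2 - 2 * a * (b' t) * s * c - 2 * a * (b' t) * s ^ 2
          - 14 * a * (b t) ^ 2 * (b' t) - a ^ 2 * (b' t) ^ 2 - 12 * a ^ 4 * s * c
          - 12 * a ^ 4 * s ^ 2 + 20 * a ^ 4 * (b t) ^ 2 - 6 * a ^ 5 * (b' t)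
          + 20 * a ^ 8) * (hE1 t ht) +
        (-24 * s ^ 2 * c ^ 2 - 16 * s ^ 3 * c + 8 * s ^ 4 + 32 * (b t) ^ 2 * c ^ 2
          + 96 * (b t) ^ 2 * s * c + 64 * (b t) ^ 2 * s ^ 2 + 40 * a ^ 4 * s * c
          + 32 * a ^ 4 * s ^ 2 - 8 * a ^ 4 * (b t) ^ 2 - 8 * a ^ 8) * hE3
    have hfac : (-8 * c * s ^ 3) *
        (5 * s ^ 2 + 6 * c * s - (a ^ 4 - c ^ 2 - 2 * σ * c₂ * c * a ^ 2)) = 0 := by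
      linear_combination -hG
    have hne8 : (-8 : ℝ) * c * s ^ 3 ≠ 0 := by
      intro h
      apply hc0
      have : c * ((-8 : ℝ) * s ^ 3) = 0 := by linear_combination h
      rcases mul_eq_zero.mp this with h' | h'
      · exact h'
      · exact absurd h' (by positivity)
    have := (mul_eq_zero.mp hfac).resolve_left hne8
    linear_combination this
  -- S is constant on I
  have hScont : ContinuousOn (fun t => Real.sqrt (a ^ 4 + (b t) ^ 2)) I :=
    Real.continuous_sqrt.comp_continuousOn (continuousOn_const.add (hbcont.pow 2))
  have hsubI : ∀ t₁ ∈ I, ∀ t₂ ∈ I, Set.uIcc t₁ t₂ ⊆ I := by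
    intro t₁ ht₁ t₂ ht₂ x hx
    rw [hIeq, Set.mem_Ioo] at ht₁ ht₂
    rw [hIeq, Set.mem_Ioo]
    rcases Set.mem_uIcc.mp hx with ⟨h1, h2⟩ | ⟨h1, h2⟩ <;>
      exact ⟨by linarith [ht₁.1, ht₂.1], by linarith [ht₁.2, ht₂.2]⟩
  have hquad : ∀ x y : ℝ, x ≠ y →
      5 * x ^ 2 + 6 * c * x = a ^ 4 - c ^ 2 - 2 * σ * c₂ * c * a ^ 2 →
      5 * y ^ 2 + 6 * c * y = a ^ 4 - c ^ 2 - 2 * σ * c₂ * c * a ^ 2 →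
      5 * (x + y) + 6 * c = 0 := by
    intro x y hxy hx hy
    have h : (x - y) * (5 * (x + y) + 6 * c) = 0 := by linear_combination hx - hy
    exact (mul_eq_zero.mp h).resolve_left (sub_ne_zero.mpr hxy)
  have hSconst : ∀ t₁ ∈ I, ∀ t₂ ∈ I,
      Real.sqrt (a ^ 4 + (b t₁) ^ 2) = Real.sqrt (a ^ 4 + (b t₂) ^ 2) := by
    intro t₁ ht₁ t₂ ht₂
    by_contra hne12
    set S : ℝ → ℝ := fun t => Real.sqrt (a ^ 4 + (b t) ^ 2) with hSdef
    have hm : (S t₁ + S t₂) / 2 ∈ Set.uIcc (S t₁) (S t₂) := by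
      rcases le_total (S t₁) (S t₂) with h | h
      · rw [Set.uIcc_of_le h, Set.mem_Icc]; exact ⟨by linarith, by linarith⟩
      · rw [Set.uIcc_of_ge h, Set.mem_Icc]; exact ⟨by linarith, by linarith⟩
    obtain ⟨t₃, ht₃mem, ht₃⟩ :=
      intermediate_value_uIcc (hScont.mono (hsubI t₁ ht₁ t₂ ht₂)) hm
    have ht₃I : t₃ ∈ I := hsubI t₁ ht₁ t₂ ht₂ ht₃mem
    have hv1 : S t₁ ≠ (S t₁ + S t₂) / 2 := fun h => hne12 (by linarith)
    have hv2 : S t₂ ≠ (S t₁ + S t₂) / 2 := fun h => hne12 (by linarith)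
    have e1 := hquad (S t₁) ((S t₁ + S t₂) / 2) hv1 (hkey t₁ ht₁) (ht₃ ▸ hkey t₃ ht₃I)
    have e2 := hquad (S t₂) ((S t₁ + S t₂) / 2) hv2 (hkey t₂ ht₂) (ht₃ ▸ hkey t₃ ht₃I)
    exact hne12 (by linarith)
  -- b is constant on I
  obtain ⟨t₀, ht₀⟩ := hne
  refine ⟨b t₀, fun t ht => ?_⟩
  by_contra hbne
  have hsq : (b t) ^ 2 = (b t₀) ^ 2 := by
    have h := hSconst t ht t₀ ht₀
    have h1 := hs2 t ht
    have h2 := hs2 t₀ ht₀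
    rw [h] at h1
    linarith
  have hopp : b t₀ = -(b t) := by
    have h : (b t - b t₀) * (b t + b t₀) = 0 := by linear_combination hsq
    rcases mul_eq_zero.mp h with h' | h'
    · exact absurd (by linarith [sub_eq_zero.mp h'] : b t = b t₀) hbne
    · linarith
  have hbt0 : b t ≠ 0 := fun h => hbne (by rw [h, hopp, h]; ring)
  have h0m : (0 : ℝ) ∈ Set.uIcc (b t) (b t₀) := by
    rw [hopp]
    rcases le_total (b t) (-(b t)) with h | h
    · rw [Set.uIcc_of_le h, Set.mem_Icc]; exact ⟨by linarith, by linarith⟩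
    · rw [Set.uIcc_of_ge h, Set.mem_Icc]; exact ⟨by linarith, by linarith⟩
  obtain ⟨t₃, ht₃mem, ht₃⟩ :=
    intermediate_value_uIcc (hbcont.mono (hsubI t ht t₀ ht₀)) h0m
  have ht₃I : t₃ ∈ I := hsubI t ht t₀ ht₀ ht₃mem
  have hsq3 : (b t) ^ 2 = (b t₃) ^ 2 := by
    have h := hSconst t ht t₃ ht₃I
    have h1 := hs2 t ht
    have h2 := hs2 t₃ ht₃I
    rw [h] at h1
    linarith
  rw [ht₃] at hsq3
  exact hbt0 (pow_eq_zero_iff (n := 2) (by norm_num) |>.mp (by simpa using hsq3))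
end

section
/- Let I ⊆ ℝ be a nonempty open interval, let a, C₁ ∈ ℝ, and let f : I → ℝ be differentiable with a⁴ + f(t) > 0 for all t ∈ I. If f′(t) · (5·√(a⁴ + f(t)) + 3·C₁) = 0 for all t ∈ I, then f is constant on I. -/
/-- Equation (3.34) in the proof of Theorem 3.11: if `f' · (5√(a⁴ + f) + 3C₁) = 0` on a
nonempty open interval on which `a⁴ + f > 0`, then `f` is constant there. -/
theorem stmt_2 (I : Set ℝ) (hI : ∃ lo hi : ℝ, I = Set.Ioo lo hi) (hne : I.Nonempty)
    (a C₁ : ℝ) (f f' : ℝ → ℝ)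
    (hd : ∀ t ∈ I, HasDerivAt f (f' t) t)
    (hpos : ∀ t ∈ I, a ^ 4 + f t > 0)
    (hzero : ∀ t ∈ I, f' t * (5 * Real.sqrt (a ^ 4 + f t) + 3 * C₁) = 0) :
    ∃ c : ℝ, ∀ t ∈ I, f t = c := by
  obtain ⟨lo, hi, rfl⟩ := hI
  obtain ⟨t₀, ht₀⟩ := hne
  set V : ℝ → ℝ := fun s => 5 * Real.sqrt (a ^ 4 + f s) + 3 * C₁ with hVdef
  -- V² has derivative 0 on the interval
  have hVd : ∀ s ∈ Set.Ioo lo hi, HasDerivAt (fun x => (V x) ^ 2) 0 s := by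
    intro s hs
    have hps := hpos s hs
    have h1 : HasDerivAt (fun x => a ^ 4 + f x) (f' s) s := (hd s hs).const_add _
    have hne0 : a ^ 4 + f s ≠ 0 := hps.ne'
    have h2 := h1.sqrt hne0
    have h3 : HasDerivAt V (5 * (f' s / (2 * Real.sqrt (a ^ 4 + f s)))) s :=
      (h2.const_mul 5).add_const _
    have h4 := h3.fun_pow 2
    refine h4.congr_deriv (Eq.symm ?_)
    have hz := hzero s hs
    have hsq : Real.sqrt (a ^ 4 + f s) ≠ 0 := Real.sqrt_ne_zero'.mpr hps
    simp only [hVdef, pow_one, Nat.cast_ofNat]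
    field_simp
    rcases mul_eq_zero.mp hz with h | h
    · rw [h]; ring
    · rw [h]; ring
  have hVcont : ContinuousOn V (Set.Ioo lo hi) := by
    intro s hs
    have h1 : HasDerivAt (fun x => a ^ 4 + f x) (f' s) s := (hd s hs).const_add _
    exact (((h1.sqrt (hpos s hs).ne').const_mul 5).add_const _).continuousAt.continuousWithinAt
  -- V² is constant on the interval
  have key : ∀ x ∈ Set.Ioo lo hi, ∀ y ∈ Set.Ioo lo hi, x < y → (V x) ^ 2 = (V y) ^ 2 := by
    intro x hx y hy hxy
    have hsub : Set.Icc x y ⊆ Set.Ioo lo hi :=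
      Set.Icc_subset_Ioo hx.1 hy.2
    have hcont : ContinuousOn (fun s => (V s) ^ 2) (Set.Icc x y) := fun s hs =>
      (hVd s (hsub hs)).continuousAt.continuousWithinAt
    have hderiv : ∀ s ∈ Set.Ioo x y, HasDerivAt (fun s => (V s) ^ 2) ((fun _ => (0:ℝ)) s) s :=
      fun s hs => hVd s (hsub (Set.Ioo_subset_Icc_self hs))
    obtain ⟨c, hc, hc'⟩ := exists_hasDerivAt_eq_slope (fun s => (V s) ^ 2) (fun _ => 0)
      hxy hcont hderiv
    have hne : y - x ≠ 0 := sub_ne_zero.mpr hxy.ne'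
    field_simp [slope_def_field] at hc'
    linarith
  have keysq : ∀ x ∈ Set.Ioo lo hi, (V x) ^ 2 = (V t₀) ^ 2 := by
    intro x hx
    rcases lt_trichotomy x t₀ with h | h | h
    · exact key x hx t₀ ht₀ h
    · rw [h]
    · exact (key t₀ ht₀ x hx h).symm
  refine ⟨f t₀, fun t ht => ?_⟩
  -- From (V t)² = (V t₀)², conclude V t = V t₀ using IVT on signs
  have hVt : V t = V t₀ := by
    have hsq := keysq t ht
    have habs : V t = V t₀ ∨ V t = -V t₀ := sq_eq_sq_iff_eq_or_eq_neg.mp hsq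
    rcases habs with h | h
    · exact h
    rcases eq_or_ne (V t₀) 0 with h0 | h0
    · simp [h, h0]
    -- opposite signs: IVT yields a zero of V, contradicting (V z)² = (V t₀)² ≠ 0
    exfalso
    have hsub : Set.uIcc t t₀ ⊆ Set.Ioo lo hi :=
      (Set.ordConnected_Ioo).uIcc_subset ht ht₀
    have hivt := intermediate_value_uIcc (hVcont.mono hsub)
    have h0mem : (0 : ℝ) ∈ Set.uIcc (V t) (V t₀) := by
      rw [h]
      rcases lt_or_gt_of_ne h0 with hlt | hgt
      · exact Set.mem_uIcc.mpr (Or.inr ⟨le_of_lt hlt, by linarith⟩)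
      · exact Set.mem_uIcc.mpr (Or.inl ⟨by linarith, le_of_lt hgt⟩)
    obtain ⟨z, hz, hVz⟩ := hivt h0mem
    have h2 := keysq z (hsub hz)
    rw [hVz] at h2
    have h3 : V t₀ ^ 2 = 0 := by rw [← h2]; ring
    exact h0 (pow_eq_zero_iff (n := 2) (by norm_num) |>.mp h3)
  -- From V t = V t₀, conclude f t = f t₀
  have hsqrt : Real.sqrt (a ^ 4 + f t) = Real.sqrt (a ^ 4 + f t₀) := by
    have : 5 * Real.sqrt (a ^ 4 + f t) + 3 * C₁ = 5 * Real.sqrt (a ^ 4 + f t₀) + 3 * C₁ := hVt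
    linarith
  have h1 := Real.sq_sqrt (hpos t ht).le
  have h2 := Real.sq_sqrt (hpos t₀ ht₀).le
  rw [hsqrt] at h1
  rw [h2] at h1
  linarith
end

section
/- Let x₁, x₂, x₃ ∈ ℝ with x₃ ≠ 0, and let A = !![0, −x₃, x₂; x₃, 0, −x₁; 0, 0, 0] be a 3×3 real matrix. Then the matrix exponential exp(A) equals !![cos x₃, −sin x₃, (x₁/x₃)·(1 − cos x₃) + (x₂/x₃)·sin x₃; sin x₃, cos x₃, (x₂/x₃)·(1 − cos x₃) − (x₁/x₃)·sin x₃; 0, 0, 1]. -/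
open NormedSpace Matrix

noncomputable section

namespace Stmt8Aux

def Jm : Matrix (Fin 3) (Fin 3) ℝ := !![0,-1,0; 1,0,0; 0,0,0]
def Km : Matrix (Fin 3) (Fin 3) ℝ := !![1,0,0; 0,1,0; 0,0,0]
def Dm : Matrix (Fin 3) (Fin 3) ℝ := !![0,0,0; 0,0,0; 0,0,1]

lemma hJ2 : Jm * Jm = -Km := by
  simp [Jm, Km]
  ext i
  fin_cases i <;> norm_num [Matrix.mul_apply, Fin.sum_univ_succ]

lemma hKK : Km * Km = Km := by
  ext i j
  fin_cases i <;> fin_cases j <;> norm_num [Km, Matrix.mul_apply, Fin.sum_univ_succ]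

lemma hJK : Jm * Km = Jm := by
  ext i j
  fin_cases i <;> fin_cases j <;> norm_num [Km, Jm, Matrix.mul_apply, Fin.sum_univ_succ]

lemma Jodd (n : ℕ) : Jm ^ (2 * n + 1) = ((-1 : ℝ) ^ n) • Jm := by
  induction n with
  | zero => simp
  | succ n ih =>
    have : 2 * (n + 1) + 1 = (2 * n + 1) + 2 := by ring
    rw [this, pow_add, ih, pow_two, hJ2, smul_mul_assoc, Matrix.mul_neg, hJK]
    rw [pow_succ]
    module

lemma Jeven (n : ℕ) : Jm ^ (2 * (n + 1)) = ((-1 : ℝ) ^ (n + 1)) • Km := by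
  induction n with
  | zero => simpa [pow_two] using hJ2
  | succ n ih =>
    have : 2 * (n + 1 + 1) = 2 * (n + 1) + 2 := by ring
    rw [this, pow_add, ih, pow_two, hJ2, smul_mul_assoc, Matrix.mul_neg, hKK]
    rw [pow_succ]
    module

lemma one_eq : (1 : Matrix (Fin 3) (Fin 3) ℝ) = Km + Dm := by
  ext i j
  fin_cases i <;> fin_cases j <;> norm_num [Km, Dm, Matrix.one_apply, Matrix.vecHead, Matrix.vecTail, Fin.ext_iff]

lemma rot_exp (t : ℝ) :
    NormedSpace.exp ((t • Jm : Matrix (Fin 3) (Fin 3) ℝ)) =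
      Real.cos t • Km + Dm + Real.sin t • Jm := by
  rw [NormedSpace.exp_eq_tsum ℝ]
  refine HasSum.tsum_eq (HasSum.even_add_odd ?_ ?_)
  · have hc := (Real.hasSum_cos t).smul_const Km
    have hd : HasSum (fun n : ℕ => if n = 0 then Dm else 0) Dm := hasSum_ite_eq 0 Dm
    have h := hc.add hd
    convert h using 2 with n
    · rfl
    cases n with
    | zero => simpa using one_eq
    | succ n =>
      rw [smul_pow, Jeven, if_neg (Nat.succ_ne_zero n), add_zero, smul_smul, smul_smul]
      congr 1
      field_simp
  · have hs := (Real.hasSum_sin t).smul_const Jm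
    convert hs using 2 with n
    · rfl
    rw [smul_pow, Jodd, smul_smul, smul_smul]
    congr 1
    field_simp

end Stmt8Aux

open Stmt8Aux in
/-- Equation (5.10) of Section 6: the matrix exponential of the matrix `A` of `ad_X`. -/
theorem stmt_8 (x₁ x₂ x₃ : ℝ) (h : x₃ ≠ 0) :
    NormedSpace.exp (!![0, -x₃, x₂; x₃, 0, -x₁; 0, 0, 0] : Matrix (Fin 3) (Fin 3) ℝ) =
      !![Real.cos x₃, -Real.sin x₃,
           (x₁ / x₃) * (1 - Real.cos x₃) + (x₂ / x₃) * Real.sin x₃;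
         Real.sin x₃, Real.cos x₃,
           (x₂ / x₃) * (1 - Real.cos x₃) - (x₁ / x₃) * Real.sin x₃;
         0, 0, 1] := by
  set P : Matrix (Fin 3) (Fin 3) ℝ := !![1,0,x₁/x₃; 0,1,x₂/x₃; 0,0,1] with hP
  set Q : Matrix (Fin 3) (Fin 3) ℝ := !![1,0,-(x₁/x₃); 0,1,-(x₂/x₃); 0,0,1] with hQ
  have hPQ : P * Q = 1 := by
    ext i j
    fin_cases i <;> fin_cases j <;>
      norm_num [hP, hQ, Matrix.mul_apply, Fin.sum_univ_succ, Matrix.one_apply, Fin.ext_iff]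
  have hQP : Q * P = 1 := by
    ext i j
    fin_cases i <;> fin_cases j <;>
      norm_num [hP, hQ, Matrix.mul_apply, Fin.sum_univ_succ, Matrix.one_apply, Fin.ext_iff]
  let U : (Matrix (Fin 3) (Fin 3) ℝ)ˣ := ⟨P, Q, hPQ, hQP⟩
  have key : (!![0, -x₃, x₂; x₃, 0, -x₁; 0, 0, 0] : Matrix (Fin 3) (Fin 3) ℝ) =
      (U : Matrix (Fin 3) (Fin 3) ℝ) * (x₃ • Jm) * (↑U⁻¹ : Matrix (Fin 3) (Fin 3) ℝ) := by
    show _ = P * (x₃ • Jm) * Q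
    ext i j
    fin_cases i <;> fin_cases j <;>
      · norm_num [hP, hQ, Jm, Matrix.mul_apply, Fin.sum_univ_succ]
        try field_simp
        try ring
  rw [key, Matrix.exp_units_conj, rot_exp]
  show P * _ * Q = _
  ext i j
  fin_cases i <;> fin_cases j <;>
    · norm_num [hP, hQ, Jm, Km, Dm, Matrix.mul_apply, Fin.sum_univ_succ]
      try field_simp
      try ring
end
end

section
/- Let I ⊆ ℝ be a nonempty open interval, a ∈ ℝ, and b : I → ℝ differentiable with a⁴ + b(t)² > 0 for all t ∈ I. Define α(t) = −b(t)·(−2·(a⁴ + b(t)²) + a·b′(t))/(2·(a⁴ + b(t)²)), β(t) = b(t)·b′(t)/(2·(a⁴ + b(t)²)), γ(t) = a·(−2·(a⁴ + b(t)²) + a·b′(t))/(2·(a⁴ + b(t)²)). Then (α(t) = 0 and β(t) = 0 and γ(t) = 1 for all t ∈ I) if and only if (b(t) = 0 for all t ∈ I and a = −1). -/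
/-- Proposition 3.14(i) (computational content): the coefficients (3.7)–(3.9) satisfy
`α ≡ 0`, `β ≡ 0`, `γ ≡ 1` on `I` iff `b ≡ 0` on `I` and `a = −1`. -/
theorem stmt_11 (I : Set ℝ) (hI : ∃ lo hi : ℝ, I = Set.Ioo lo hi) (hne : I.Nonempty)
    (a : ℝ) (b b' : ℝ → ℝ)
    (hd : ∀ t ∈ I, HasDerivAt b (b' t) t)
    (hpos : ∀ t ∈ I, a ^ 4 + (b t) ^ 2 > 0)
    (α β γ : ℝ → ℝ)
    (hα : ∀ t ∈ I, α t =
      -b t * (-2 * (a ^ 4 + (b t) ^ 2) + a * b' t) / (2 * (a ^ 4 + (b t) ^ 2)))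
    (hβ : ∀ t ∈ I, β t = b t * b' t / (2 * (a ^ 4 + (b t) ^ 2)))
    (hγ : ∀ t ∈ I, γ t =
      a * (-2 * (a ^ 4 + (b t) ^ 2) + a * b' t) / (2 * (a ^ 4 + (b t) ^ 2))) :
    (∀ t ∈ I, α t = 0 ∧ β t = 0 ∧ γ t = 1) ↔ ((∀ t ∈ I, b t = 0) ∧ a = -1) := by
  have hIopen : IsOpen I := by
    obtain ⟨lo, hi, rfl⟩ := hI; exact isOpen_Ioo
  -- if b ≡ 0 on I then b' ≡ 0 on I
  have hderiv0 : (∀ t ∈ I, b t = 0) → ∀ t ∈ I, b' t = 0 := by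
    intro hb0 t ht
    have h1 : HasDerivAt b (0 : ℝ) t := by
      have : b =ᶠ[nhds t] fun _ => (0 : ℝ) :=
        Filter.eventuallyEq_of_mem (hIopen.mem_nhds ht) hb0
      exact (hasDerivAt_const t (0 : ℝ)).congr_of_eventuallyEq this
    exact (hd t ht).unique h1
  constructor
  · rintro h
    have hb0 : ∀ t ∈ I, b t = 0 := by
      intro t ht
      obtain ⟨hA, hB, hC⟩ := h t ht
      have hD := hpos t ht
      have hDne : (2 * (a ^ 4 + (b t) ^ 2)) ≠ 0 := by positivity
      by_contra hbne
      -- from β = 0: b' t = 0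
      have hb' : b' t = 0 := by
        have := hβ t ht; rw [hB] at this
        field_simp at this
        simp at this
        rcases this with h | h
        · exact absurd h hbne
        · exact h
      -- from α = 0: -b·(-2D) = 0 → b·D = 0 → b = 0, contradiction
      have := hα t ht; rw [hA, hb'] at this
      field_simp at this
      have h3 : b t * (a ^ 4 + b t ^ 2) = 0 := by linear_combination -this / 2
      rcases mul_eq_zero.1 h3 with h | h
      · exact hbne h
      · exact absurd h (ne_of_gt hD)
    refine ⟨hb0, ?_⟩
    obtain ⟨t, ht⟩ := hne
    have hb' := hderiv0 hb0 t ht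
    have hbt := hb0 t ht
    obtain ⟨hA, hB, hC⟩ := h t ht
    have := hγ t ht
    rw [hC, hbt, hb'] at this
    have hD : a ^ 4 + (0:ℝ) ^ 2 > 0 := by have := hpos t ht; rwa [hbt] at this
    have ha4 : a ^ 4 > 0 := by nlinarith
    have hane : a ≠ 0 := by
      intro h0; rw [h0] at ha4; norm_num at ha4
    have h2 : a * (-2 * (a ^ 4 + (0:ℝ) ^ 2) + a * 0) = 2 * (a ^ 4 + (0:ℝ) ^ 2) := by
      field_simp at this
      nlinarith [this, ha4]
    -- a · (−2a⁴) = 2a⁴ → −a⁵ = a⁴ → a = −1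
    have : a ^ 4 * (a + 1) = 0 := by nlinarith [h2]
    rcases mul_eq_zero.1 this with h | h
    · linarith
    · linarith
  · rintro ⟨hb0, rfl⟩ t ht
    have hb' := hderiv0 hb0 t ht
    have hbt := hb0 t ht
    refine ⟨?_, ?_, ?_⟩ <;> [rw [hα t ht]; rw [hβ t ht]; rw [hγ t ht]] <;>
      rw [hbt, hb'] <;> norm_num
end
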